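/- Lower-tail Chernoff bound for submodular functions under 1-negative association: Let X_1,...,X_n be {0,1}-valued 1-negatively associated random variables with means x_1,...,x_n, let f : {0,1}^n → ℝ≥0 be monotone non-decreasing submodular with all marginal values in [0,1], let F be the multilinear extension of f, and set μ_0 = F(x_1,...,x_n). Then for all δ ∈ (0,1], Pr[f(X_1,...,X_n) ≤ (1−δ)·μ_0] ≤ exp(−μ_0·δ²/2). -/

import Mathlib

open MeasureTheory ProbabilityTheory Real Finset

/-- A vector is binary if each coordinate is 0 or 1. -/
def BinaryVec {m : ℕ} (x : Fin m → ℝ) : Prop := ∀ i, x i = 0 ∨ x i = 1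

/-- Monotone non-decreasing on the Boolean cube. -/
def MonoCube {m : ℕ} (f : (Fin m → ℝ) → ℝ) : Prop :=
  ∀ x y : Fin m → ℝ, BinaryVec x → BinaryVec y → x ≤ y → f x ≤ f y

/-- Submodular on the Boolean cube: marginal gains are coordinatewise non-increasing. -/
def SubmodCube {m : ℕ} (f : (Fin m → ℝ) → ℝ) : Prop :=
  ∀ (i : Fin m) (x y : Fin m → ℝ), BinaryVec x → BinaryVec y → x ≤ y →
    f (Function.update y i 1) - f (Function.update y i 0) ≤
      f (Function.update x i 1) - f (Function.update x i 0)

/-- Supermodular on the Boolean cube: marginal gains are coordinatewise non-decreasing. -/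
def SupermodCube {m : ℕ} (f : (Fin m → ℝ) → ℝ) : Prop :=
  ∀ (i : Fin m) (x y : Fin m → ℝ), BinaryVec x → BinaryVec y → x ≤ y →
    f (Function.update x i 1) - f (Function.update x i 0) ≤
      f (Function.update y i 1) - f (Function.update y i 0)

/-- 1-negative association for binary random variables: for every coordinate `i`,
every monotone `F` depending only on coordinates `≠ i` and every monotone `G` of `X i`,
`E[F·G] ≤ E[F]·E[G]`. -/
def OneNA {Ω : Type*} [MeasurableSpace Ω] (μ : Measure Ω) {m : ℕ} (X : Fin m → Ω → ℝ) : Prop :=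
  ∀ (i : Fin m) (F : (Fin m → ℝ) → ℝ) (G : ℝ → ℝ),
    Measurable F → MonoCube F →
    (∀ x y : Fin m → ℝ, (∀ j, j ≠ i → x j = y j) → F x = F y) →
    Measurable G → Monotone G →
    ∫ ω, F (fun j => X j ω) * G (X i ω) ∂μ ≤
      (∫ ω, F (fun j => X j ω) ∂μ) * ∫ ω, G (X i ω) ∂μ

section Aux
variable {n : ℕ}

lemma BinaryVec.update {x : Fin n → ℝ} (hx : BinaryVec x) (i : Fin n) {c : ℝ}
    (hc : c = 0 ∨ c = 1) : BinaryVec (Function.update x i c) := by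
  intro j
  rw [Function.update_apply]
  split
  · exact hc
  · exact hx j

lemma update_le_update {x y : Fin n → ℝ} (h : x ≤ y) (i : Fin n) (c : ℝ) :
    Function.update x i c ≤ Function.update y i c := by
  refine Pi.le_def.mpr fun j => ?_
  rw [Function.update_apply, Function.update_apply]
  split
  · exact le_rfl
  · exact h j

lemma update_mono_val (y : Fin n → ℝ) (i : Fin n) {c c' : ℝ} (h : c ≤ c') :
    Function.update y i c ≤ Function.update y i c' := by
  refine Pi.le_def.mpr fun j => ?_
  rw [Function.update_apply, Function.update_apply]
  split
  · exact h
  · exact le_rfl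

/-- weight of subset S within processed set T -/
noncomputable def wgt (p : Fin n → ℝ) (T S : Finset (Fin n)) : ℝ :=
  (∏ i ∈ S, p i) * ∏ i ∈ T \ S, (1 - p i)

/-- substitute coordinates in T by the indicator of S, keep x elsewhere -/
def subV (T S : Finset (Fin n)) (x : Fin n → ℝ) : Fin n → ℝ :=
  fun i => if i ∈ T then (if i ∈ S then (1 : ℝ) else 0) else x i

noncomputable def mexp (p : Fin n → ℝ) (T : Finset (Fin n)) (g : (Fin n → ℝ) → ℝ)
    (x : Fin n → ℝ) : ℝ :=
  ∑ S ∈ T.powerset, g (subV T S x) * wgt p T S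

lemma wgt_nonneg {p : Fin n → ℝ} (hp : ∀ i, 0 ≤ p i ∧ p i ≤ 1) (T S : Finset (Fin n)) :
    0 ≤ wgt p T S :=
  mul_nonneg (Finset.prod_nonneg fun i _ => (hp i).1)
    (Finset.prod_nonneg fun i _ => by linarith [(hp i).2])

lemma wgt_sum {p : Fin n → ℝ} (T : Finset (Fin n)) :
    ∑ S ∈ T.powerset, wgt p T S = 1 := by
  have h := Finset.prod_add (fun i => p i) (fun i => 1 - p i) T
  simp only [add_sub_cancel, Finset.prod_const_one] at h
  rw [show (∑ S ∈ T.powerset, wgt p T S) = ∑ t ∈ T.powerset, (∏ i ∈ t, p i) * ∏ i ∈ T \ t, (1 - p i) from rfl, ← h]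

lemma subV_binary {T S : Finset (Fin n)} {x : Fin n → ℝ} (hx : BinaryVec x) :
    BinaryVec (subV T S x) := by
  intro i
  unfold subV
  split
  · split
    · exact Or.inr rfl
    · exact Or.inl rfl
  · exact hx i

lemma subV_update {T S : Finset (Fin n)} {i : Fin n} (hiT : i ∉ T) (x : Fin n → ℝ) (c : ℝ) :
    subV T S (Function.update x i c) = Function.update (subV T S x) i c := by
  funext j
  rw [Function.update_apply]
  unfold subV
  by_cases hj : j = i
  · subst hj
    simp [if_neg hiT]
  · simp [Function.update_apply, hj]

lemma subV_mono_S {T S₁ S₂ : Finset (Fin n)} (h : S₁ ⊆ S₂) (x : Fin n → ℝ) :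
    subV T S₁ x ≤ subV T S₂ x := by
  refine Pi.le_def.mpr fun j => ?_
  unfold subV
  split
  · split
    · simp [h ‹_›]
    · split <;> norm_num
  · exact le_rfl

lemma subV_mono_x (T S : Finset (Fin n)) {x y : Fin n → ℝ} (h : x ≤ y) :
    subV T S x ≤ subV T S y := by
  refine Pi.le_def.mpr fun j => ?_
  unfold subV
  split
  · exact le_rfl
  · exact h j

lemma subV_univ (S : Finset (Fin n)) (x : Fin n → ℝ) :
    subV Finset.univ S x = fun i => if i ∈ S then (1:ℝ) else 0 := by
  funext j; simp [subV]

lemma wgt_insert0 {p : Fin n → ℝ} {T S : Finset (Fin n)} {i : Fin n}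
    (hiT : i ∉ T) (hiS : i ∉ S) :
    wgt p (insert i T) S = (1 - p i) * wgt p T S := by
  unfold wgt
  have h1 : (insert i T) \ S = insert i (T \ S) := by
    ext j; simp only [Finset.mem_sdiff, Finset.mem_insert]
    constructor
    · rintro ⟨h | h, hs⟩
      · exact Or.inl h
      · exact Or.inr ⟨h, hs⟩
    · rintro (h | ⟨h, hs⟩)
      · subst h; exact ⟨Or.inl rfl, hiS⟩
      · exact ⟨Or.inr h, hs⟩
  rw [h1, Finset.prod_insert (by simp [hiT])]
  ring

lemma wgt_insert1 {p : Fin n → ℝ} {T S : Finset (Fin n)} {i : Fin n}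
    (hiT : i ∉ T) (hST : S ⊆ T) :
    wgt p (insert i T) (insert i S) = p i * wgt p T S := by
  have hiS : i ∉ S := fun h => hiT (hST h)
  unfold wgt
  have h1 : (insert i T) \ (insert i S) = T \ S := by
    ext j; simp only [Finset.mem_sdiff, Finset.mem_insert, not_or]
    constructor
    · rintro ⟨h | h, hj, hs⟩
      · exact absurd h hj
      · exact ⟨h, hs⟩
    · rintro ⟨h, hs⟩
      exact ⟨Or.inr h, fun hji => hiT (hji ▸ h), hs⟩
  rw [h1, Finset.prod_insert hiS]
  ring

lemma subV_insert0 {T S : Finset (Fin n)} {i : Fin n} (hiT : i ∉ T) (hiS : i ∉ S)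
    (x : Fin n → ℝ) :
    subV (insert i T) S x = subV T S (Function.update x i 0) := by
  funext j
  unfold subV
  by_cases hj : j = i
  · subst hj
    simp [hiT, hiS, Function.update_self]
  · simp [Function.update_apply, hj, Finset.mem_insert]

lemma subV_insert1 {T S : Finset (Fin n)} {i : Fin n} (hiT : i ∉ T) (hST : S ⊆ T)
    (x : Fin n → ℝ) :
    subV (insert i T) (insert i S) x = subV T S (Function.update x i 1) := by
  have hiS : i ∉ S := fun h => hiT (hST h)
  funext j
  unfold subV
  by_cases hj : j = i
  · subst hj
    simp [hiT, Function.update_self]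
  · simp [Function.update_apply, hj, Finset.mem_insert]

lemma mexp_empty (p : Fin n → ℝ) (g : (Fin n → ℝ) → ℝ) (x : Fin n → ℝ) :
    mexp p ∅ g x = g x := by
  have : subV (∅ : Finset (Fin n)) ∅ x = x := by funext j; simp [subV]
  simp [mexp, wgt, this]

lemma mexp_insert {p : Fin n → ℝ} {T : Finset (Fin n)} {i : Fin n} (hiT : i ∉ T)
    (g : (Fin n → ℝ) → ℝ) (x : Fin n → ℝ) :
    mexp p (insert i T) g x =
      (1 - p i) * mexp p T g (Function.update x i 0) +
        p i * mexp p T g (Function.update x i 1) := by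
  unfold mexp
  rw [Finset.sum_powerset_insert hiT, Finset.mul_sum, Finset.mul_sum]
  congr 1
  · refine Finset.sum_congr rfl fun S hS => ?_
    have hST : S ⊆ T := Finset.mem_powerset.mp hS
    have hiS : i ∉ S := fun h => hiT (hST h)
    rw [wgt_insert0 hiT hiS, subV_insert0 hiT hiS]
    ring
  · refine Finset.sum_congr rfl fun S hS => ?_
    have hST : S ⊆ T := Finset.mem_powerset.mp hS
    rw [wgt_insert1 hiT hST, subV_insert1 hiT hST]
    ring

lemma mexp_nonneg {p : Fin n → ℝ} (hp : ∀ i, 0 ≤ p i ∧ p i ≤ 1) {T : Finset (Fin n)}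
    {g : (Fin n → ℝ) → ℝ} (hg0 : ∀ x, BinaryVec x → 0 ≤ g x) {x : Fin n → ℝ}
    (hx : BinaryVec x) : 0 ≤ mexp p T g x :=
  Finset.sum_nonneg fun S _ => mul_nonneg (hg0 _ (subV_binary hx)) (wgt_nonneg hp T S)

lemma mexp_le_one {p : Fin n → ℝ} (hp : ∀ i, 0 ≤ p i ∧ p i ≤ 1) {T : Finset (Fin n)}
    {g : (Fin n → ℝ) → ℝ} (hg1 : ∀ x, BinaryVec x → g x ≤ 1) {x : Fin n → ℝ}
    (hx : BinaryVec x) : mexp p T g x ≤ 1 := by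
  calc mexp p T g x ≤ ∑ S ∈ T.powerset, wgt p T S :=
        Finset.sum_le_sum fun S _ => by
          have := wgt_nonneg hp T S
          nlinarith [hg1 _ (subV_binary (T := T) (S := S) hx)]
    _ = 1 := wgt_sum T

end Aux

section Aux2
open Finset
variable {n : ℕ}

lemma harris (p : Fin n → ℝ) (hp : ∀ i, 0 ≤ p i ∧ p i ≤ 1) :
    ∀ (T : Finset (Fin n)) (u v : Finset (Fin n) → ℝ),
      (∀ S₁ S₂, S₁ ⊆ S₂ → S₂ ⊆ T → u S₂ ≤ u S₁) →
      (∀ S₁ S₂, S₁ ⊆ S₂ → S₂ ⊆ T → v S₂ ≤ v S₁) →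
      (∑ S ∈ T.powerset, u S * wgt p T S) * (∑ S ∈ T.powerset, v S * wgt p T S)
        ≤ ∑ S ∈ T.powerset, u S * v S * wgt p T S := by
  intro T
  induction T using Finset.induction_on with
  | empty => intro u v _ _; simp [wgt]
  | @insert i T hiT ih =>
    intro u v hu hv
    have split3 : ∀ w : Finset (Fin n) → ℝ,
        ∑ S ∈ (insert i T).powerset, w S * wgt p (insert i T) S =
          (1 - p i) * ∑ S ∈ T.powerset, w S * wgt p T S +
            p i * ∑ S ∈ T.powerset, w (insert i S) * wgt p T S := by
      intro w
      rw [Finset.sum_powerset_insert hiT, Finset.mul_sum, Finset.mul_sum]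
      congr 1
      · refine Finset.sum_congr rfl fun S hS => ?_
        have hST : S ⊆ T := Finset.mem_powerset.mp hS
        rw [wgt_insert0 hiT (fun h => hiT (hST h))]; ring
      · refine Finset.sum_congr rfl fun S hS => ?_
        rw [wgt_insert1 hiT (Finset.mem_powerset.mp hS)]; ring
    rw [split3 u, split3 v, split3 (fun S => u S * v S)]
    set U0 := ∑ S ∈ T.powerset, u S * wgt p T S with hU0
    set U1 := ∑ S ∈ T.powerset, u (insert i S) * wgt p T S with hU1
    set V0 := ∑ S ∈ T.powerset, v S * wgt p T S with hV0
    set V1 := ∑ S ∈ T.powerset, v (insert i S) * wgt p T S with hV1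
    have hC0 : U0 * V0 ≤ ∑ S ∈ T.powerset, u S * v S * wgt p T S :=
      ih u v (fun S₁ S₂ h12 h2 => hu S₁ S₂ h12 (h2.trans (Finset.subset_insert i T)))
        (fun S₁ S₂ h12 h2 => hv S₁ S₂ h12 (h2.trans (Finset.subset_insert i T)))
    have hC1 : U1 * V1 ≤ ∑ S ∈ T.powerset, u (insert i S) * v (insert i S) * wgt p T S :=
      ih (fun S => u (insert i S)) (fun S => v (insert i S))
        (fun S₁ S₂ h12 h2 => hu (insert i S₁) (insert i S₂)
          (Finset.insert_subset_insert i h12) (Finset.insert_subset_insert i h2))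
        (fun S₁ S₂ h12 h2 => hv (insert i S₁) (insert i S₂)
          (Finset.insert_subset_insert i h12) (Finset.insert_subset_insert i h2))
    have hU10 : U1 ≤ U0 := Finset.sum_le_sum fun S hS =>
      mul_le_mul_of_nonneg_right
        (hu S (insert i S) (Finset.subset_insert i S)
          (Finset.insert_subset_insert i (Finset.mem_powerset.mp hS)))
        (wgt_nonneg hp T S)
    have hV10 : V1 ≤ V0 := Finset.sum_le_sum fun S hS =>
      mul_le_mul_of_nonneg_right
        (hv S (insert i S) (Finset.subset_insert i S)
          (Finset.insert_subset_insert i (Finset.mem_powerset.mp hS)))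
        (wgt_nonneg hp T S)
    have hpi := hp i
    nlinarith [mul_nonneg (mul_nonneg hpi.1 (by linarith [hpi.2] : (0:ℝ) ≤ 1 - p i))
      (mul_nonneg (sub_nonneg.mpr hU10) (sub_nonneg.mpr hV10))]

lemma exp_chord {lam a : ℝ} (ha0 : 0 ≤ a) (ha1 : a ≤ 1) :
    Real.exp (-(lam * a)) ≤ 1 + a * (Real.exp (-lam) - 1) := by
  have h := convexOn_exp.2 (Set.mem_univ (0:ℝ)) (Set.mem_univ (-lam))
    (by linarith : (0:ℝ) ≤ 1 - a) ha0 (by ring)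
  simp only [smul_eq_mul, mul_zero, zero_add, Real.exp_zero, mul_one] at h
  have hrw : -(lam * a) = a * (-lam) := by ring
  rw [hrw]
  linarith

end Aux2

section Aux3
open Finset
variable {n : ℕ}

lemma stepB (p : Fin n → ℝ) (hp : ∀ i, 0 ≤ p i ∧ p i ≤ 1) (lam : ℝ) (hlam : 0 ≤ lam)
    (f : (Fin n → ℝ) → ℝ) (hfnonneg : ∀ x, BinaryVec x → 0 ≤ f x)
    (hfmono : MonoCube f) (hfsub : SubmodCube f)
    (hmarg : ∀ (i : Fin n) (x : Fin n → ℝ), BinaryVec x →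
      f (Function.update x i 1) - f (Function.update x i 0) ∈ Set.Icc (0 : ℝ) 1) :
    ∀ (T : Finset (Fin n)) (z : Fin n → ℝ), BinaryVec z →
      mexp p T (fun x => Real.exp (-(lam * f x))) z
        ≤ Real.exp ((Real.exp (-lam) - 1) * mexp p T f z) := by
  intro T
  induction T using Finset.induction_on with
  | empty =>
    intro z hz
    rw [mexp_empty, mexp_empty]
    apply Real.exp_le_exp.mpr
    nlinarith [Real.add_one_le_exp (-lam), hfnonneg z hz,
      mul_nonneg (by linarith [Real.add_one_le_exp (-lam)] : (0:ℝ) ≤ Real.exp (-lam) - 1 + lam)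
        (hfnonneg z hz)]
  | @insert i T hiT ih =>
    intro z hz
    have hz0 : BinaryVec (Function.update z i 0) := hz.update i (Or.inl rfl)
    have hz1 : BinaryVec (Function.update z i 1) := hz.update i (Or.inr rfl)
    rw [mexp_insert hiT, mexp_insert hiT]
    set c := Real.exp (-lam) - 1 with hc_def
    have hc0 : c ≤ 0 := by
      have : Real.exp (-lam) ≤ 1 := Real.exp_le_one_iff.mpr (by linarith)
      simp [hc_def]; linarith
    have hc1 : -1 ≤ c := by
      have := Real.exp_pos (-lam); simp [hc_def]; linarith
    set G0 := mexp p T (fun x => Real.exp (-(lam * f x))) (Function.update z i 0) with hG0def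
    set G1 := mexp p T (fun x => Real.exp (-(lam * f x))) (Function.update z i 1) with hG1def
    set F0 := mexp p T f (Function.update z i 0) with hF0def
    set F1 := mexp p T f (Function.update z i 1) with hF1def
    -- marginal function
    set a : Finset (Fin n) → ℝ :=
      fun S => f (subV T S (Function.update z i 1)) - f (subV T S (Function.update z i 0))
      with ha_def
    have ha_marg : ∀ S : Finset (Fin n), 0 ≤ a S ∧ a S ≤ 1 := by
      intro S
      have h := hmarg i (subV T S z) (subV_binary hz)
      rw [ha_def]
      simp only [subV_update hiT]
      exact ⟨h.1, h.2⟩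
    -- d = F1 - F0
    have hd_eq : F1 - F0 = ∑ S ∈ T.powerset, a S * wgt p T S := by
      rw [hF1def, hF0def]
      unfold mexp
      rw [← Finset.sum_sub_distrib]
      exact Finset.sum_congr rfl fun S _ => by rw [ha_def]; ring
    have hd0 : 0 ≤ F1 - F0 := by
      rw [hd_eq]
      exact Finset.sum_nonneg fun S _ => mul_nonneg (ha_marg S).1 (wgt_nonneg hp T S)
    have hd1 : F1 - F0 ≤ 1 := by
      rw [hd_eq, ← wgt_sum (p := p) T]
      exact Finset.sum_le_sum fun S _ => by
        have := wgt_nonneg hp T S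
        nlinarith [(ha_marg S).2]
    -- G1 ≤ G0 + c * Σ u a w
    set u : Finset (Fin n) → ℝ :=
      fun S => Real.exp (-(lam * f (subV T S (Function.update z i 0)))) with hu_def
    have hG1_le : G1 ≤ G0 + c * ∑ S ∈ T.powerset, u S * a S * wgt p T S := by
      have hterm : ∀ S ∈ T.powerset,
          Real.exp (-(lam * f (subV T S (Function.update z i 1)))) * wgt p T S ≤
            u S * wgt p T S + c * (u S * a S * wgt p T S) := by
        intro S _
        have hf1 : f (subV T S (Function.update z i 1)) =
            f (subV T S (Function.update z i 0)) + a S := by rw [ha_def]; ring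
        have hsplit : Real.exp (-(lam * f (subV T S (Function.update z i 1)))) =
            u S * Real.exp (-(lam * a S)) := by
          rw [hu_def, hf1, ← Real.exp_add]; ring_nf
        have hchord := exp_chord (lam := lam) (ha_marg S).1 (ha_marg S).2
        have hupos : 0 ≤ u S := (Real.exp_pos _).le
        have hwn := wgt_nonneg hp T S
        rw [hsplit]
        have : u S * Real.exp (-(lam * a S)) ≤ u S * (1 + a S * c) := by
          apply mul_le_mul_of_nonneg_left _ hupos
          rw [hc_def]; exact hchord
        nlinarith [mul_le_mul_of_nonneg_right this hwn]
      calc G1 = ∑ S ∈ T.powerset,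
            Real.exp (-(lam * f (subV T S (Function.update z i 1)))) * wgt p T S := rfl
        _ ≤ ∑ S ∈ T.powerset, (u S * wgt p T S + c * (u S * a S * wgt p T S)) :=
            Finset.sum_le_sum hterm
        _ = G0 + c * ∑ S ∈ T.powerset, u S * a S * wgt p T S := by
            rw [Finset.sum_add_distrib, ← Finset.mul_sum]
            rfl
    -- Harris
    have hHarris : G0 * (F1 - F0) ≤ ∑ S ∈ T.powerset, u S * a S * wgt p T S := by
      have hG0sum : G0 = ∑ S ∈ T.powerset, u S * wgt p T S := rfl
      rw [hG0sum, hd_eq]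
      apply harris p hp T u a
      · intro S₁ S₂ h12 h2
        rw [hu_def]
        apply Real.exp_le_exp.mpr
        have hle : f (subV T S₁ (Function.update z i 0)) ≤ f (subV T S₂ (Function.update z i 0)) :=
          hfmono _ _ (subV_binary hz0) (subV_binary hz0) (subV_mono_S h12 _)
        nlinarith
      · intro S₁ S₂ h12 h2
        rw [ha_def]
        simp only [subV_update hiT]
        exact hfsub i (subV T S₁ z) (subV T S₂ z) (subV_binary hz) (subV_binary hz)
          (subV_mono_S h12 z)
    have hG1_le' : G1 ≤ G0 * (1 + c * (F1 - F0)) := by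
      have := mul_le_mul_of_nonneg_left hHarris (neg_nonneg.mpr hc0)
      -- -c * (G0 * d) ≤ -c * Σ  ⇒ c * Σ ≤ c * (G0*d)
      nlinarith [hG1_le]
    have hG0nn : 0 ≤ G0 :=
      mexp_nonneg hp (fun x _ => (Real.exp_pos _).le) hz0
    have hIH0 : G0 ≤ Real.exp (c * F0) := ih _ hz0
    have hpi := hp i
    have hnc : 0 ≤ -c := by linarith
    have h2 : (-c) * (F1 - F0) ≤ 1 := mul_le_one₀ (by linarith) hd0 hd1
    have h3 : p i * ((-c) * (F1 - F0)) ≤ 1 := by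
      nlinarith [mul_nonneg hnc hd0]
    have h1pcd : 0 ≤ 1 + p i * (c * (F1 - F0)) := by nlinarith
    have hstep : (1 - p i) * G0 + p i * G1 ≤ G0 * (1 + p i * (c * (F1 - F0))) := by
      nlinarith [mul_le_mul_of_nonneg_left hG1_le' hpi.1]
    calc (1 - p i) * G0 + p i * G1 ≤ G0 * (1 + p i * (c * (F1 - F0))) := hstep
      _ ≤ Real.exp (c * F0) * (1 + p i * (c * (F1 - F0))) :=
          mul_le_mul_of_nonneg_right hIH0 h1pcd
      _ ≤ Real.exp (c * F0) * Real.exp (p i * (c * (F1 - F0))) :=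
          mul_le_mul_of_nonneg_left (by linarith [Real.add_one_le_exp (p i * (c * (F1 - F0)))])
            (Real.exp_pos _).le
      _ = Real.exp (c * ((1 - p i) * F0 + p i * F1)) := by
          rw [← Real.exp_add]; congr 1; ring
end Aux3

section Aux4
variable {n : ℕ}

lemma supermod_exp_neg (lam : ℝ) (hlam : 0 ≤ lam) (f : (Fin n → ℝ) → ℝ)
    (hmono : MonoCube f) (hsub : SubmodCube f) :
    SupermodCube (fun x => Real.exp (-(lam * f x))) := by
  intro i x y hx hy hxy
  simp only
  set A := f (Function.update x i 1) with hA
  set B := f (Function.update x i 0) with hB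
  set C := f (Function.update y i 1) with hC
  set D := f (Function.update y i 0) with hD
  have hsub' : C - D ≤ A - B := hsub i x y hx hy hxy
  have hDC : D ≤ C := hmono _ _ (hy.update i (Or.inl rfl)) (hy.update i (Or.inr rfl))
    (update_mono_val y i (by norm_num))
  have hBD : B ≤ D := hmono _ _ (hx.update i (Or.inl rfl)) (hy.update i (Or.inl rfl))
    (update_le_update hxy i 0)
  have h1 : Real.exp (-(lam * B)) * (1 - Real.exp (-(lam * (A - B)))) =
      Real.exp (-(lam * B)) - Real.exp (-(lam * A)) := by
    rw [mul_sub, mul_one, ← Real.exp_add]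
    ring_nf
  have h2 : Real.exp (-(lam * D)) * (1 - Real.exp (-(lam * (C - D)))) =
      Real.exp (-(lam * D)) - Real.exp (-(lam * C)) := by
    rw [mul_sub, mul_one, ← Real.exp_add]
    ring_nf
  have hf1 : Real.exp (-(lam * D)) ≤ Real.exp (-(lam * B)) := by
    apply Real.exp_le_exp.mpr
    nlinarith
  have hf2 : 1 - Real.exp (-(lam * (C - D))) ≤ 1 - Real.exp (-(lam * (A - B))) := by
    have : Real.exp (-(lam * (A - B))) ≤ Real.exp (-(lam * (C - D))) := by
      apply Real.exp_le_exp.mpr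
      nlinarith
    linarith
  have hf3 : 0 ≤ 1 - Real.exp (-(lam * (C - D))) := by
    have : Real.exp (-(lam * (C - D))) ≤ 1 :=
      Real.exp_le_one_iff.mpr (by nlinarith)
    linarith
  have hkey := mul_le_mul hf1 hf2 hf3 (Real.exp_pos _).le
  -- hkey : exp(-(lam D)) * (1 - exp(-(lam (C-D)))) ≤ exp(-(lam B)) * (1 - exp(-(lam (A-B))))
  rw [h1, h2] at hkey
  linarith

lemma exp_quad {x : ℝ} (hx : 0 ≤ x) : Real.exp (-x) ≤ 1 - x + x ^ 2 / 2 := by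
  have hd : ∀ t : ℝ, HasDerivAt (fun s : ℝ => 1 - s + s ^ 2 / 2 - Real.exp (-s))
      (0 - 1 + 2 * t ^ 1 / 2 - Real.exp (-t) * (-1)) t := by
    intro t
    have h1 : HasDerivAt (fun s : ℝ => Real.exp (-s)) (Real.exp (-t) * (-1)) t := by
      have := (Real.hasDerivAt_exp (-t)).comp t ((hasDerivAt_id t).neg)
      exact this
    have h2 : HasDerivAt (fun s : ℝ => 1 - s + s ^ 2 / 2) (0 - 1 + 2 * t ^ 1 / 2) t :=
      ((hasDerivAt_const t (1:ℝ)).sub (hasDerivAt_id t)).add ((hasDerivAt_pow 2 t).div_const 2)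
    exact h2.sub h1
  have hmono : Monotone (fun s : ℝ => 1 - s + s ^ 2 / 2 - Real.exp (-s)) := by
    apply monotone_of_deriv_nonneg
    · exact fun t => (hd t).differentiableAt
    · intro t
      rw [(hd t).deriv]
      nlinarith [Real.add_one_le_exp (-t)]
  have h := hmono hx
  simp only [Real.exp_zero] at h
  norm_num at h
  linarith
end Aux4

section Aux5
open MeasureTheory
variable {Ω : Type*} [MeasurableSpace Ω] {n : ℕ}

lemma update_eq_self_of_eq {x : Fin n → ℝ} {i : Fin n} {c : ℝ} (h : x i = c) :
    Function.update x i c = x := by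
  funext j
  rw [Function.update_apply]
  split
  · next hj => subst hj; exact h.symm
  · rfl

lemma measurable_subV_comp {T S : Finset (Fin n)} :
    Measurable fun x : Fin n → ℝ => subV T S x := by
  apply measurable_pi_lambda
  intro j
  by_cases hj : j ∈ T
  · simp only [subV, if_pos hj]; exact measurable_const
  · simp only [subV, if_neg hj]; exact measurable_pi_apply j

lemma measurable_updateFun (i : Fin n) (c : ℝ) :
    Measurable fun x : Fin n → ℝ => Function.update x i c := by
  have h : (fun x : Fin n → ℝ => Function.update x i c) =
      fun x j => if j = i then c else x j := by
    funext x j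
    rw [Function.update_apply]
  rw [h]
  apply measurable_pi_lambda
  intro j
  by_cases hj : j = i
  · simp only [if_pos hj]; exact measurable_const
  · simp only [if_neg hj]; exact measurable_pi_apply j

lemma measurable_mexp {p : Fin n → ℝ} {T : Finset (Fin n)} {g : (Fin n → ℝ) → ℝ}
    (hg : Measurable g) : Measurable fun x => mexp p T g x := by
  unfold mexp
  apply Finset.measurable_sum
  intro S _
  exact (hg.comp measurable_subV_comp).mul_const _

lemma integrable_comp (μ : Measure Ω) [IsProbabilityMeasure μ]
    (X : Fin n → Ω → ℝ) (hX : ∀ i, Measurable (X i))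
    (hbin : ∀ i ω, X i ω = 0 ∨ X i ω = 1)
    (G : (Fin n → ℝ) → ℝ) (hG : Measurable G) (C : ℝ)
    (hb : ∀ x, BinaryVec x → |G x| ≤ C) :
    Integrable (fun ω => G (fun j => X j ω)) μ := by
  have hm : Measurable fun ω => G (fun j => X j ω) :=
    hG.comp (measurable_pi_lambda _ fun j => hX j)
  refine ⟨hm.aestronglyMeasurable, HasFiniteIntegral.of_bounded (C := C) ?_⟩
  filter_upwards with ω
  simpa [Real.norm_eq_abs] using hb _ (fun i => hbin i ω)

lemma marg_mexp {p : Fin n → ℝ} {T : Finset (Fin n)} {i : Fin n} (hiT : i ∉ T)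
    (g : (Fin n → ℝ) → ℝ) (x : Fin n → ℝ) :
    mexp p T g (Function.update x i 1) - mexp p T g (Function.update x i 0) =
      ∑ S ∈ T.powerset, (g (Function.update (subV T S x) i 1) -
        g (Function.update (subV T S x) i 0)) * wgt p T S := by
  unfold mexp
  rw [← Finset.sum_sub_distrib]
  exact Finset.sum_congr rfl fun S _ => by rw [subV_update hiT, subV_update hiT]; ring

lemma stepA (μ : Measure Ω) [IsProbabilityMeasure μ]
    (X : Fin n → Ω → ℝ) (hX : ∀ i, Measurable (X i))
    (hbin : ∀ i ω, X i ω = 0 ∨ X i ω = 1) (hNA : OneNA μ X)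
    (g : (Fin n → ℝ) → ℝ) (hgmeas : Measurable g)
    (hg0 : ∀ x, BinaryVec x → 0 ≤ g x) (hg1 : ∀ x, BinaryVec x → g x ≤ 1)
    (hsup : SupermodCube g) :
    ∫ ω, g (fun j => X j ω) ∂μ ≤
      mexp (fun i => ∫ ω, X i ω ∂μ) Finset.univ g (fun _ => 0) := by
  set p : Fin n → ℝ := fun i => ∫ ω, X i ω ∂μ with hp_def
  have hXint : ∀ i, Integrable (X i) μ := fun i => by
    simpa using integrable_comp μ X hX hbin (fun x => x i) (measurable_pi_apply i) 1
      (fun x hx => by rcases hx i with h | h <;> simp [h])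
  have hp : ∀ i, 0 ≤ p i ∧ p i ≤ 1 := by
    intro i
    constructor
    · apply integral_nonneg
      intro ω
      rcases hbin i ω with h | h <;> simp [h]
    · calc ∫ ω, X i ω ∂μ ≤ ∫ _ω, (1:ℝ) ∂μ := integral_mono (hXint i) (integrable_const 1)
            (fun ω => by rcases hbin i ω with h | h <;> simp [h])
        _ = 1 := by simp
  have habs : ∀ T : Finset (Fin n), ∀ x, BinaryVec x → |mexp p T g x| ≤ 1 := by
    intro T x hx
    rw [abs_le]
    refine ⟨?_, mexp_le_one hp hg1 hx⟩
    have := mexp_nonneg (T := T) (g := g) hp hg0 hx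
    linarith
  have key : ∀ T : Finset (Fin n),
      ∫ ω, g (fun j => X j ω) ∂μ ≤ ∫ ω, mexp p T g (fun j => X j ω) ∂μ := by
    intro T
    induction T using Finset.induction_on with
    | empty => simp only [mexp_empty]; exact le_rfl
    | @insert i T hiT ih =>
      refine ih.trans ?_
      set F : (Fin n → ℝ) → ℝ := fun x =>
        mexp p T g (Function.update x i 1) - mexp p T g (Function.update x i 0) with hF_def
      have hFmeas : Measurable F :=
        ((measurable_mexp hgmeas).comp (measurable_updateFun i 1)).sub
          ((measurable_mexp hgmeas).comp (measurable_updateFun i 0))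
      have hFabs : ∀ x, BinaryVec x → |F x| ≤ 2 := by
        intro x hx
        have h1 := habs T _ (hx.update i (Or.inr rfl))
        have h0 := habs T _ (hx.update i (Or.inl rfl))
        rw [abs_le] at h1 h0 ⊢
        constructor
        · have := h1.1
          have := h0.2
          simp only [hF_def]
          linarith
        · have := h1.2
          have := h0.1
          simp only [hF_def]
          linarith
      have hI0 : Integrable (fun ω => mexp p T g (Function.update (fun j => X j ω) i 0)) μ :=
        integrable_comp μ X hX hbin _ ((measurable_mexp hgmeas).comp (measurable_updateFun i 0))
          1 (fun x hx => habs T _ (hx.update i (Or.inl rfl)))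
      have hIF : Integrable (fun ω => F (fun j => X j ω)) μ :=
        integrable_comp μ X hX hbin F hFmeas 2 hFabs
      have hIXF : Integrable (fun ω => F (fun j => X j ω) * X i ω) μ := by
        refine integrable_comp μ X hX hbin (fun x => F x * x i)
          (hFmeas.mul (measurable_pi_apply i)) 2 (fun x hx => ?_)
        show |F x * x i| ≤ 2
        rcases hx i with h | h
        · rw [h, mul_zero, abs_zero]; norm_num
        · rw [h, mul_one]; exact hFabs x hx
      have hpt : ∀ ω, mexp p T g (fun j => X j ω) =
          mexp p T g (Function.update (fun j => X j ω) i 0) +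
            F (fun j => X j ω) * X i ω := by
        intro ω
        rcases hbin i ω with h | h
        · have h0 : Function.update (fun j => X j ω) i 0 = fun j => X j ω :=
            update_eq_self_of_eq h
          rw [h0, h]; ring
        · have h1 : Function.update (fun j => X j ω) i 1 = fun j => X j ω :=
            update_eq_self_of_eq h
          simp only [hF_def]
          rw [h1, h]; ring
      have hFmono : MonoCube F := by
        intro x y hx hy hxy
        simp only [hF_def]
        rw [marg_mexp hiT, marg_mexp hiT]
        refine Finset.sum_le_sum fun S _ => ?_
        exact mul_le_mul_of_nonneg_right
          (hsup i (subV T S x) (subV T S y) (subV_binary hx) (subV_binary hy)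
            (subV_mono_x T S hxy)) (wgt_nonneg hp T S)
      have hFdep : ∀ x y : Fin n → ℝ, (∀ j, j ≠ i → x j = y j) → F x = F y := by
        intro x y hxy
        simp only [hF_def]
        rw [marg_mexp hiT, marg_mexp hiT]
        refine Finset.sum_congr rfl fun S _ => ?_
        have hupd : ∀ c : ℝ, Function.update (subV T S x) i c =
            Function.update (subV T S y) i c := by
          intro c
          funext j
          rw [Function.update_apply, Function.update_apply]
          split
          · rfl
          · next hj =>
            unfold subV
            split
            · rfl
            · exact hxy j hj
        rw [hupd 1, hupd 0]
      have hNAi := hNA i F (fun t => t) hFmeas hFmono hFdep measurable_id monotone_id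
      have h2 : ∫ ω, F (fun j => X j ω) * X i ω ∂μ ≤
          p i * ∫ ω, F (fun j => X j ω) ∂μ := by
        rw [mul_comm (p i)]
        exact hNAi
      calc ∫ ω, mexp p T g (fun j => X j ω) ∂μ
          = ∫ ω, (mexp p T g (Function.update (fun j => X j ω) i 0) +
              F (fun j => X j ω) * X i ω) ∂μ := by
            exact integral_congr_ae (Filter.Eventually.of_forall hpt)
        _ = (∫ ω, mexp p T g (Function.update (fun j => X j ω) i 0) ∂μ) +
              ∫ ω, F (fun j => X j ω) * X i ω ∂μ := integral_add hI0 hIXF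
        _ ≤ (∫ ω, mexp p T g (Function.update (fun j => X j ω) i 0) ∂μ) +
              p i * ∫ ω, F (fun j => X j ω) ∂μ := add_le_add_right h2 _
        _ = ∫ ω, (mexp p T g (Function.update (fun j => X j ω) i 0) +
              p i * F (fun j => X j ω)) ∂μ := by
            rw [integral_add hI0 (hIF.const_mul (p i)), integral_const_mul]
        _ = ∫ ω, mexp p (insert i T) g (fun j => X j ω) ∂μ := by
            refine integral_congr_ae (Filter.Eventually.of_forall fun ω => ?_)
            show mexp p T g (Function.update (fun j => X j ω) i 0) +
                p i * F (fun j => X j ω) = mexp p (insert i T) g (fun j => X j ω)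
            rw [mexp_insert hiT]
            simp only [hF_def]
            ring
  refine (key Finset.univ).trans (le_of_eq ?_)
  have hconst : ∀ x : Fin n → ℝ, mexp p Finset.univ g x = mexp p Finset.univ g (fun _ => 0) := by
    intro x
    unfold mexp
    refine Finset.sum_congr rfl fun S _ => ?_
    rw [subV_univ, subV_univ]
  calc ∫ ω, mexp p Finset.univ g (fun j => X j ω) ∂μ
      = ∫ _ω, mexp p Finset.univ g (fun _ => 0) ∂μ :=
        integral_congr_ae (Filter.Eventually.of_forall fun ω => hconst _)
    _ = mexp p Finset.univ g (fun _ => 0) := by simp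

end Aux5

/-- Lower-tail Chernoff bound for monotone submodular functions of binary
1-negatively associated random variables, with respect to the multilinear extension
evaluated at the means. -/
theorem submodular_chernoff_lower_tail {Ω : Type*} [MeasurableSpace Ω] (μ : Measure Ω)
    [IsProbabilityMeasure μ] {n : ℕ} (X : Fin n → Ω → ℝ)
    (hX : ∀ i, Measurable (X i)) (hbin : ∀ i ω, X i ω = 0 ∨ X i ω = 1)
    (hNA : OneNA μ X)
    (f : (Fin n → ℝ) → ℝ) (hfmeas : Measurable f)
    (hfnonneg : ∀ x, BinaryVec x → 0 ≤ f x)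
    (hfmono : MonoCube f) (hfsub : SubmodCube f)
    (hmarg : ∀ (i : Fin n) (x : Fin n → ℝ), BinaryVec x →
      f (Function.update x i 1) - f (Function.update x i 0) ∈ Set.Icc (0 : ℝ) 1)
    (μ0 : ℝ)
    (hμ0 : μ0 = ∑ S : Finset (Fin n), f (fun i => if i ∈ S then 1 else 0) *
      ((∏ i ∈ S, ∫ ω, X i ω ∂μ) * ∏ i ∈ Sᶜ, (1 - ∫ ω, X i ω ∂μ)))
    (δ : ℝ) (hδ0 : 0 < δ) (hδ1 : δ ≤ 1) :
    (μ {ω | f (fun j => X j ω) ≤ (1 - δ) * μ0}).toReal ≤ Real.exp (-(μ0 * δ ^ 2 / 2)) := by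
  classical
  set p : Fin n → ℝ := fun i => ∫ ω, X i ω ∂μ with hp_def
  have hXint : ∀ i, Integrable (X i) μ := fun i => by
    simpa using integrable_comp μ X hX hbin (fun x => x i) (measurable_pi_apply i) 1
      (fun x hx => by rcases hx i with h | h <;> simp [h])
  have hp : ∀ i, 0 ≤ p i ∧ p i ≤ 1 := by
    intro i
    constructor
    · apply integral_nonneg; intro ω; rcases hbin i ω with h | h <;> simp [h]
    · calc ∫ ω, X i ω ∂μ ≤ ∫ _ω, (1:ℝ) ∂μ := integral_mono (hXint i) (integrable_const 1)
            (fun ω => by rcases hbin i ω with h | h <;> simp [h])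
        _ = 1 := by simp
  have hμ0' : μ0 = mexp p Finset.univ f (fun _ => 0) := by
    rw [hμ0]
    unfold mexp wgt
    rw [Finset.powerset_univ]
    refine Finset.sum_congr rfl fun S _ => ?_
    rw [subV_univ, Finset.compl_eq_univ_sdiff]
  have hμ0nn : 0 ≤ μ0 := by
    rw [hμ0']
    exact mexp_nonneg hp hfnonneg (fun _ => Or.inl rfl)
  have hhmeas : Measurable fun x : Fin n → ℝ => Real.exp (-(δ * f x)) :=
    Real.measurable_exp.comp ((measurable_const.mul hfmeas).neg)
  have hh0 : ∀ x : Fin n → ℝ, BinaryVec x → 0 ≤ Real.exp (-(δ * f x)) :=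
    fun x _ => (Real.exp_pos _).le
  have hh1 : ∀ x : Fin n → ℝ, BinaryVec x → Real.exp (-(δ * f x)) ≤ 1 := by
    intro x hx
    apply Real.exp_le_one_iff.mpr
    nlinarith [hfnonneg x hx, hδ0.le]
  have hsup := supermod_exp_neg δ hδ0.le f hfmono hfsub
  have hA := stepA μ X hX hbin hNA _ hhmeas hh0 hh1 hsup
  have hB := stepB p hp δ hδ0.le f hfnonneg hfmono hfsub hmarg Finset.univ
    (fun _ => 0) (fun _ => Or.inl rfl)
  have hchain : ∫ ω, Real.exp (-(δ * f (fun j => X j ω))) ∂μ ≤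
      Real.exp ((Real.exp (-δ) - 1) * μ0) := by
    rw [hμ0']
    exact hA.trans hB
  set A := {ω | f (fun j => X j ω) ≤ (1 - δ) * μ0} with hA_def
  have hAmeas : MeasurableSet A :=
    measurableSet_le (hfmeas.comp (measurable_pi_lambda _ fun j => hX j)) measurable_const
  have hhint : Integrable (fun ω => Real.exp (-(δ * f (fun j => X j ω)))) μ :=
    integrable_comp μ X hX hbin _ hhmeas 1
      (fun x hx => by rw [abs_of_nonneg (hh0 x hx)]; exact hh1 x hx)
  have hmark : Real.exp (-(δ * ((1 - δ) * μ0))) * (μ A).toReal ≤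
      ∫ ω, Real.exp (-(δ * f (fun j => X j ω))) ∂μ := by
    have hind : ∀ ω, A.indicator (fun _ => Real.exp (-(δ * ((1 - δ) * μ0)))) ω ≤
        Real.exp (-(δ * f (fun j => X j ω))) := by
      intro ω
      by_cases hω : ω ∈ A
      · rw [Set.indicator_of_mem hω]
        apply Real.exp_le_exp.mpr
        have hfω : f (fun j => X j ω) ≤ (1 - δ) * μ0 := hω
        nlinarith [mul_le_mul_of_nonneg_left hfω hδ0.le]
      · rw [Set.indicator_of_notMem hω]
        exact (Real.exp_pos _).le
    calc Real.exp (-(δ * ((1 - δ) * μ0))) * (μ A).toReal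
        = ∫ ω, A.indicator (fun _ => Real.exp (-(δ * ((1 - δ) * μ0)))) ω ∂μ := by
          rw [integral_indicator_const _ hAmeas, smul_eq_mul, measureReal_def]; ring
      _ ≤ ∫ ω, Real.exp (-(δ * f (fun j => X j ω))) ∂μ :=
          integral_mono ((integrable_const _).indicator hAmeas) hhint hind
  have hm : (μ A).toReal = Real.exp (-(δ * ((1 - δ) * μ0))) * (μ A).toReal *
      Real.exp (δ * ((1 - δ) * μ0)) := by
    rw [mul_comm (Real.exp (-(δ * ((1 - δ) * μ0)))) _, mul_assoc, ← Real.exp_add,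
      neg_add_cancel, Real.exp_zero, mul_one]
  have h1 : (μ A).toReal ≤ Real.exp ((Real.exp (-δ) - 1) * μ0) *
      Real.exp (δ * ((1 - δ) * μ0)) := by
    rw [hm]
    exact mul_le_mul_of_nonneg_right (hmark.trans hchain)
      (Real.exp_pos (δ * ((1 - δ) * μ0))).le
  refine h1.trans ?_
  rw [← Real.exp_add]
  apply Real.exp_le_exp.mpr
  nlinarith [mul_le_mul_of_nonneg_left (exp_quad hδ0.le) hμ0nn]
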